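/- arXiv:1906.02746 — 2 statements merged into one kernel-verified Lean document; each statement's English description precedes it below -/
import Mathlib

section
/- Let u₁, u₂ ∈ ℝ^n be orthonormal and û₁, û₂ ∈ ℝ^n be orthonormal; set U = [u₁ u₂] ∈ ℝ^{n×2}, Û = [û₁ û₂] ∈ ℝ^{n×2}, and δ = ‖(I − Û Ûᵀ) U‖₂. Suppose δ ≤ 1/2. Let ū₁ = Û Ûᵀ u₁ be the orthogonal projection of u₁ onto span{û₁, û₂}, and let ũ₂ be any unit vector lying in span{û₁, û₂} with ⟨ũ₂, ū₁⟩ = 0. Then there exists β ∈ {−1, 1} such that ‖ũ₂ − β u₂‖₂² ≤ 10 δ. -/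
open Matrix MeasureTheory ProbabilityTheory Real

noncomputable section

/-- Euclidean (ℓ₂) norm of a vector in ℝ^n. -/
def norm2 {n : ℕ} (x : Fin n → ℝ) : ℝ := Real.sqrt (∑ i, x i ^ 2)

/-- Entrywise maximum absolute value (ℓ_∞ norm) of a vector in ℝ^n. -/
def normInf {n : ℕ} (x : Fin n → ℝ) : ℝ := ⨆ i, |x i|

/-- Euclidean inner product on ℝ^n. -/
def inner2 {n : ℕ} (x y : Fin n → ℝ) : ℝ := ∑ i, x i * y i

/-- Spectral norm (ℓ₂ operator norm) of a real matrix. -/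
def specNorm {m n : ℕ} (A : Matrix (Fin m) (Fin n) ℝ) : ℝ :=
  ⨆ x : {x : Fin n → ℝ // norm2 x ≤ 1}, norm2 (A.mulVec x.1)

/-- Max-norm: maximum absolute value of the entries of a matrix. -/
def maxNorm {m n : ℕ} (A : Matrix (Fin m) (Fin n) ℝ) : ℝ :=
  ⨆ q : Fin m × Fin n, |A q.1 q.2|

/-- The n×2 matrix with columns u and v. -/
def twoCols {n : ℕ} (u v : Fin n → ℝ) : Matrix (Fin n) (Fin 2) ℝ :=
  Matrix.of fun i j => ![u i, v i] j

/-- The all-ones vector in ℝ^n. -/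
def onesVec (n : ℕ) : Fin n → ℝ := fun _ => 1

/-- `σ1 ≥ σ2 ≥ 0` are the two largest singular values of `H`, with corresponding
orthonormal left singular vectors `u1, u2` (eigenvectors of `H Hᵀ`). -/
def IsTopTwoSingular {n : ℕ} (H : Matrix (Fin n) (Fin n) ℝ)
    (σ1 σ2 : ℝ) (u1 u2 : Fin n → ℝ) : Prop :=
  0 ≤ σ2 ∧ σ2 ≤ σ1 ∧
  inner2 u1 u1 = 1 ∧ inner2 u2 u2 = 1 ∧ inner2 u1 u2 = 0 ∧
  (H * Hᵀ).mulVec u1 = σ1 ^ 2 • u1 ∧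
  (H * Hᵀ).mulVec u2 = σ2 ^ 2 • u2 ∧
  ∀ v : Fin n → ℝ, inner2 v u1 = 0 → inner2 v u2 = 0 →
    inner2 ((H * Hᵀ).mulVec v) v ≤ σ2 ^ 2 * inner2 v v

/-- The uniform probability measure on the interval [−M, M]. -/
def unifIcc (M : ℝ) : Measure ℝ :=
  (ENNReal.ofReal (2 * M))⁻¹ • volume.restrict (Set.Icc (-M) M)

/-- The ERO mixture law of a single pairwise measurement `R_{ij}` (with `a = r_i`, `b = r_j`):
`a − b` w.p. `ηp`, uniform on `[−M, M]` w.p. `(1−η)p`, and `0` w.p. `1−p`. -/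
def EROmix (M p η a b : ℝ) : Measure ℝ :=
  ENNReal.ofReal (η * p) • Measure.dirac (a - b) +
    ENNReal.ofReal ((1 - η) * p) • unifIcc M +
    ENNReal.ofReal (1 - p) • Measure.dirac (0 : ℝ)

/-- The Erdős–Rényi Outliers (ERO) model: `H` is skew-symmetric with zero diagonal, the
above-diagonal entries are jointly independent, and each `H_{ij}` (i < j) has the ERO
mixture law. -/
structure IsEROModel {Ω : Type} [MeasurableSpace Ω] (P : Measure Ω)
    {n : ℕ} (M p η : ℝ) (r : Fin n → ℝ)
    (H : Ω → Matrix (Fin n) (Fin n) ℝ) : Prop where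
  diag : ∀ ω i, H ω i i = 0
  skew : ∀ ω i j, H ω j i = - H ω i j
  meas : ∀ i j, Measurable fun ω => H ω i j
  indep : iIndepFun (m := fun _ => Real.measurableSpace)
    (fun (q : {q : Fin n × Fin n // q.1 < q.2}) ω => H ω q.1.1 q.1.2) P
  law : ∀ i j : Fin n, i < j →
    Measure.map (fun ω => H ω i j) P = EROmix M p η (r i) (r j)



section AuxStmt3

lemma sumsq_nonneg {n : ℕ} (x : Fin n → ℝ) : 0 ≤ ∑ i, x i ^ 2 :=
  Finset.sum_nonneg fun i _ => sq_nonneg _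

lemma mulVec_norm_bound {m n : ℕ} (A : Matrix (Fin m) (Fin n) ℝ) (x : Fin n → ℝ)
    (hx : norm2 x ≤ 1) :
    norm2 (A.mulVec x) ≤ Real.sqrt (∑ i, ∑ j, A i j ^ 2) := by
  have hx1 : ∑ j, x j ^ 2 ≤ 1 := Real.sqrt_le_one.mp hx
  unfold norm2 Matrix.mulVec dotProduct
  apply Real.sqrt_le_sqrt
  calc ∑ i, (∑ j, A i j * x j) ^ 2
      ≤ ∑ i, (∑ j, A i j ^ 2) * (∑ j, x j ^ 2) :=
        Finset.sum_le_sum fun i _ => Finset.sum_mul_sq_le_sq_mul_sq _ _ _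
    _ ≤ ∑ i, (∑ j, A i j ^ 2) * 1 :=
        Finset.sum_le_sum fun i _ => mul_le_mul_of_nonneg_left hx1 (sumsq_nonneg _)
    _ = ∑ i, ∑ j, A i j ^ 2 := by simp

lemma le_specNorm {m n : ℕ} (A : Matrix (Fin m) (Fin n) ℝ) (x : Fin n → ℝ)
    (hx : norm2 x ≤ 1) : norm2 (A.mulVec x) ≤ specNorm A := by
  have hb : BddAbove (Set.range fun s : {x : Fin n → ℝ // norm2 x ≤ 1} => norm2 (A.mulVec s.1)) := by
    refine ⟨Real.sqrt (∑ i, ∑ j, A i j ^ 2), ?_⟩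
    rintro y ⟨s, rfl⟩
    exact mulVec_norm_bound A s.1 s.2
  exact le_ciSup hb ⟨x, hx⟩

lemma specNorm_nonneg {m n : ℕ} (A : Matrix (Fin m) (Fin n) ℝ) : 0 ≤ specNorm A := by
  have h0 : norm2 (0 : Fin n → ℝ) ≤ 1 := by simp [norm2]
  exact le_trans (Real.sqrt_nonneg _) (le_specNorm A 0 h0)

lemma twoCols_mulVec {n : ℕ} (v w : Fin n → ℝ) (y : Fin 2 → ℝ) :
    (twoCols v w).mulVec y = fun i => y 0 * v i + y 1 * w i := by
  funext i
  simp [twoCols, Matrix.mulVec, dotProduct, Fin.sum_univ_two]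
  ring

lemma twoColsT_mulVec {n : ℕ} (v w x : Fin n → ℝ) :
    (twoCols v w)ᵀ.mulVec x = ![inner2 v x, inner2 w x] := by
  funext j
  fin_cases j <;>
    simp [twoCols, Matrix.mulVec, dotProduct, Matrix.transpose_apply, inner2]

lemma proj_mulVec {n : ℕ} (v w x : Fin n → ℝ) :
    (twoCols v w * (twoCols v w)ᵀ).mulVec x = inner2 v x • v + inner2 w x • w := by
  rw [← Matrix.mulVec_mulVec, twoColsT_mulVec, twoCols_mulVec]
  funext i
  simp

lemma sum_sq_sub {n : ℕ} (x y z : Fin n → ℝ) (α β : ℝ) :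
    ∑ i, (x i - (α * y i + β * z i)) ^ 2
      = inner2 x x - 2*α*(inner2 y x) - 2*β*(inner2 z x)
        + α^2 * inner2 y y + 2*α*β*(inner2 y z) + β^2 * inner2 z z := by
  have h : ∀ i, (x i - (α * y i + β * z i))^2
      = x i * x i - 2*α*(y i * x i) - 2*β*(z i * x i)
        + α^2*(y i*y i) + 2*α*β*(y i*z i) + β^2*(z i*z i) := fun i => by ring
  simp only [h, Finset.sum_add_distrib, Finset.sum_sub_distrib, ← Finset.mul_sum, inner2]

lemma sum_sq_three {n : ℕ} (y z u : Fin n → ℝ) (a b c : ℝ) :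
    ∑ i, (a * y i + b * z i - c * u i) ^ 2
      = a^2 * inner2 y y + b^2 * inner2 z z + c^2 * inner2 u u
        + 2*a*b*(inner2 y z) - 2*a*c*(inner2 y u) - 2*b*c*(inner2 z u) := by
  have h : ∀ i, (a * y i + b * z i - c * u i)^2
      = a^2*(y i*y i) + b^2*(z i*z i) + c^2*(u i*u i)
        + 2*a*b*(y i*z i) - 2*a*c*(y i*u i) - 2*b*c*(z i*u i) := fun i => by ring
  simp only [h, Finset.sum_add_distrib, Finset.sum_sub_distrib, ← Finset.mul_sum, inner2]

lemma sum_cross {n : ℕ} (x w y z : Fin n → ℝ) (α β γ θ : ℝ) :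
    ∑ i, (x i - (α * y i + β * z i)) * (w i - (γ * y i + θ * z i))
      = inner2 x w - γ*(inner2 y x) - θ*(inner2 z x) - α*(inner2 y w) - β*(inner2 z w)
        + α*γ*(inner2 y y) + (α*θ + β*γ)*(inner2 y z) + β*θ*(inner2 z z) := by
  have h : ∀ i, (x i - (α * y i + β * z i)) * (w i - (γ * y i + θ * z i))
      = x i * w i - γ*(y i * x i) - θ*(z i * x i) - α*(y i * w i) - β*(z i * w i)
        + α*γ*(y i*y i) + (α*θ + β*γ)*(y i*z i) + β*θ*(z i*z i) := fun i => by ring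
  simp only [h, Finset.sum_add_distrib, Finset.sum_sub_distrib, ← Finset.mul_sum, inner2]

lemma inner2_comb2 {n : ℕ} (y z : Fin n → ℝ) (a b c d : ℝ) :
    inner2 (a • y + b • z) (c • y + d • z)
      = a*c*(inner2 y y) + (a*d + b*c)*(inner2 y z) + b*d*(inner2 z z) := by
  have h : ∀ i, (a * y i + b * z i) * (c * y i + d * z i)
      = a*c*(y i*y i) + (a*d + b*c)*(y i*z i) + b*d*(z i*z i) := fun i => by ring
  simp only [inner2, Pi.add_apply, Pi.smul_apply, smul_eq_mul, h,
    Finset.sum_add_distrib, ← Finset.mul_sum]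

lemma abs_le_one_of_sq (X : ℝ) (h : X^2 ≤ 1) : |X| ≤ 1 := by
  nlinarith [sq_abs X, abs_nonneg X]

lemma abs_lower (X c : ℝ) (h1 : 1 - c ≤ X^2) (h2 : |X| ≤ 1) : 1 - c ≤ |X| := by
  nlinarith [sq_abs X, abs_nonneg X]

lemma sq_le_half (δ : ℝ) (h0 : 0 ≤ δ) (h : δ ≤ 1/2) : δ^2 ≤ δ/2 := by
  nlinarith

lemma scalar_final (δ a b a₁ b₁ a₂ b₂ : ℝ)
    (hδ0 : 0 ≤ δ) (hδ : δ ≤ 1/2)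
    (F1 : 1 - a₁^2 - b₁^2 ≤ δ^2)
    (F2 : 1 - a₂^2 - b₂^2 ≤ δ^2)
    (F2' : a₂^2 + b₂^2 ≤ 1)
    (F3 : (a₁*a₂ + b₁*b₂)^2 ≤ δ^2 * δ^2)
    (F4 : a^2 + b^2 = 1)
    (F5 : a*a₁ + b*b₁ = 0) :
    ∃ β : ℝ, (β = -1 ∨ β = 1) ∧ 2 - 2*(β*(a*a₂ + b*b₂)) ≤ 10*δ := by
  have hδsq : δ^2 ≤ 1/4 := by nlinarith
  have h1 : a₁ = (a₁*b - b₁*a)*b := by linear_combination (-a₁)*F4 + a*F5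
  have h2 : b₁ = -((a₁*b - b₁*a)*a) := by linear_combination (-b₁)*F4 + b*F5
  have hZsq : (a₁*b - b₁*a)^2 = a₁^2 + b₁^2 := by
    linear_combination (-a₁)*h1 + (-b₁)*h2
  have hcross : a₁*a₂ + b₁*b₂ = (a₁*b - b₁*a)*(b*a₂ - a*b₂) := by
    linear_combination a₂*h1 + b₂*h2
  have hLag : (a*a₂ + b*b₂)^2 + (a*b₂ - b*a₂)^2 = a₂^2 + b₂^2 := by
    linear_combination (a₂^2 + b₂^2)*F4
  have hZge : (3:ℝ)/4 ≤ (a₁*b - b₁*a)^2 := by nlinarith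
  have F3' : (a₁*b - b₁*a)^2 * (a*b₂ - b*a₂)^2 ≤ δ^2*δ^2 := by
    calc (a₁*b - b₁*a)^2 * (a*b₂ - b*a₂)^2 = (a₁*a₂ + b₁*b₂)^2 := by
          rw [hcross]; ring
      _ ≤ δ^2*δ^2 := F3
  have hW34 : (3/4) * (a*b₂ - b*a₂)^2 ≤ δ^2 * δ^2 := by
    nlinarith [F3', mul_nonneg (by linarith : (0:ℝ) ≤ (a₁*b - b₁*a)^2 - 3/4)
      (sq_nonneg (a*b₂ - b*a₂))]
  have hδ4 : δ^2 * δ^2 ≤ δ^2/4 := by nlinarith [sq_nonneg δ]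
  have hWle : (a*b₂ - b*a₂)^2 ≤ δ^2/3 := by linarith
  have hXsq : 1 - (4/3)*δ^2 ≤ (a*a₂ + b*b₂)^2 := by linarith
  have hXle : (a*a₂ + b*b₂)^2 ≤ 1 := by
    linarith [sq_nonneg (a*b₂ - b*a₂)]
  set X := a*a₂ + b*b₂ with hX
  have habs1 : |X| ≤ 1 := abs_le_one_of_sq X hXle
  have habs : 1 - (4/3)*δ^2 ≤ |X| := abs_lower X _ hXsq habs1
  refine ⟨if 0 ≤ X then 1 else -1, ?_, ?_⟩
  · split <;> simp
  · have hbx : (if 0 ≤ X then (1:ℝ) else -1) * X = |X| := by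
      split_ifs with h
      · rw [abs_of_nonneg h]; ring
      · rw [abs_of_neg (lt_of_not_ge h)]; ring
    rw [hbx]
    have hq : δ^2 ≤ δ/2 := sq_le_half δ hδ0 hδ
    linarith

end AuxStmt3

/-- Lemma: analysis of the projection step. -/
theorem stmt_3 {n : ℕ} (u₁ u₂ uh₁ uh₂ : Fin n → ℝ)
    (hu₁ : inner2 u₁ u₁ = 1) (hu₂ : inner2 u₂ u₂ = 1) (hu₁₂ : inner2 u₁ u₂ = 0)
    (huh₁ : inner2 uh₁ uh₁ = 1) (huh₂ : inner2 uh₂ uh₂ = 1) (huh₁₂ : inner2 uh₁ uh₂ = 0)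
    (δ : ℝ)
    (hδdef : δ = specNorm ((1 - twoCols uh₁ uh₂ * (twoCols uh₁ uh₂)ᵀ) * twoCols u₁ u₂))
    (hδ : δ ≤ 1 / 2)
    (ub₁ : Fin n → ℝ) (hub₁ : ub₁ = (twoCols uh₁ uh₂ * (twoCols uh₁ uh₂)ᵀ).mulVec u₁)
    (ut₂ : Fin n → ℝ) (hut₂norm : norm2 ut₂ = 1)
    (hut₂span : ∃ a b : ℝ, ut₂ = a • uh₁ + b • uh₂)
    (hut₂perp : inner2 ut₂ ub₁ = 0) :
    ∃ β : ℝ, (β = -1 ∨ β = 1) ∧ norm2 (ut₂ - β • u₂) ^ 2 ≤ 10 * δ := by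
  obtain ⟨a, b, hab⟩ := hut₂span
  have hδ0 : 0 ≤ δ := hδdef ▸ specNorm_nonneg _
  have he1 : norm2 ![(1:ℝ), 0] ≤ 1 := by norm_num [norm2, Fin.sum_univ_two]
  have he2 : norm2 ![(0:ℝ), 1] ≤ 1 := by norm_num [norm2, Fin.sum_univ_two]
  have hU1 : (twoCols u₁ u₂).mulVec ![(1:ℝ), 0] = u₁ := by
    rw [twoCols_mulVec]; funext i; simp
  have hU2 : (twoCols u₁ u₂).mulVec ![(0:ℝ), 1] = u₂ := by
    rw [twoCols_mulVec]; funext i; simp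
  have hd1 : norm2 (u₁ - (inner2 uh₁ u₁ • uh₁ + inner2 uh₂ u₁ • uh₂)) ≤ δ := by
    have h := le_specNorm ((1 - twoCols uh₁ uh₂ * (twoCols uh₁ uh₂)ᵀ) * twoCols u₁ u₂)
      ![(1:ℝ), 0] he1
    rw [← Matrix.mulVec_mulVec, hU1, Matrix.sub_mulVec, Matrix.one_mulVec, proj_mulVec] at h
    rw [hδdef]; exact h
  have hd2 : norm2 (u₂ - (inner2 uh₁ u₂ • uh₁ + inner2 uh₂ u₂ • uh₂)) ≤ δ := by
    have h := le_specNorm ((1 - twoCols uh₁ uh₂ * (twoCols uh₁ uh₂)ᵀ) * twoCols u₁ u₂)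
      ![(0:ℝ), 1] he2
    rw [← Matrix.mulVec_mulVec, hU2, Matrix.sub_mulVec, Matrix.one_mulVec, proj_mulVec] at h
    rw [hδdef]; exact h
  have e1 : ∑ i, (u₁ i - (inner2 uh₁ u₁ * uh₁ i + inner2 uh₂ u₁ * uh₂ i))^2 ≤ δ^2 := by
    have h := hd1
    simp only [norm2] at h
    rw [Real.sqrt_le_left hδ0] at h
    simpa using h
  have e2 : ∑ i, (u₂ i - (inner2 uh₁ u₂ * uh₁ i + inner2 uh₂ u₂ * uh₂ i))^2 ≤ δ^2 := by
    have h := hd2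
    simp only [norm2] at h
    rw [Real.sqrt_le_left hδ0] at h
    simpa using h
  have F1 : 1 - (inner2 uh₁ u₁)^2 - (inner2 uh₂ u₁)^2 ≤ δ^2 := by
    rw [sum_sq_sub, hu₁, huh₁, huh₂, huh₁₂] at e1
    linarith [e1]
  have F2 : 1 - (inner2 uh₁ u₂)^2 - (inner2 uh₂ u₂)^2 ≤ δ^2 := by
    rw [sum_sq_sub, hu₂, huh₁, huh₂, huh₁₂] at e2
    linarith [e2]
  have F2' : (inner2 uh₁ u₂)^2 + (inner2 uh₂ u₂)^2 ≤ 1 := by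
    have h0 : 0 ≤ ∑ i, (u₂ i - (inner2 uh₁ u₂ * uh₁ i + inner2 uh₂ u₂ * uh₂ i))^2 :=
      Finset.sum_nonneg fun i _ => sq_nonneg _
    rw [sum_sq_sub, hu₂, huh₁, huh₂, huh₁₂] at h0
    linarith [h0]
  have hcs : (∑ i, (u₁ i - (inner2 uh₁ u₁ * uh₁ i + inner2 uh₂ u₁ * uh₂ i))
        * (u₂ i - (inner2 uh₁ u₂ * uh₁ i + inner2 uh₂ u₂ * uh₂ i)))^2
      ≤ (∑ i, (u₁ i - (inner2 uh₁ u₁ * uh₁ i + inner2 uh₂ u₁ * uh₂ i))^2)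
        * (∑ i, (u₂ i - (inner2 uh₁ u₂ * uh₁ i + inner2 uh₂ u₂ * uh₂ i))^2) :=
    Finset.sum_mul_sq_le_sq_mul_sq _ _ _
  have hval : ∑ i, (u₁ i - (inner2 uh₁ u₁ * uh₁ i + inner2 uh₂ u₁ * uh₂ i))
        * (u₂ i - (inner2 uh₁ u₂ * uh₁ i + inner2 uh₂ u₂ * uh₂ i))
      = -((inner2 uh₁ u₁)*(inner2 uh₁ u₂) + (inner2 uh₂ u₁)*(inner2 uh₂ u₂)) := by
    rw [sum_cross, hu₁₂, huh₁, huh₂, huh₁₂]; ring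
  have F3 : ((inner2 uh₁ u₁)*(inner2 uh₁ u₂) + (inner2 uh₂ u₁)*(inner2 uh₂ u₂))^2
      ≤ δ^2 * δ^2 := by
    have hh := le_trans hcs
      (mul_le_mul e1 e2 (Finset.sum_nonneg fun i _ => sq_nonneg _) (sq_nonneg δ))
    rw [hval] at hh
    have heq : ((inner2 uh₁ u₁)*(inner2 uh₁ u₂) + (inner2 uh₂ u₁)*(inner2 uh₂ u₂))^2
        = (-((inner2 uh₁ u₁)*(inner2 uh₁ u₂) + (inner2 uh₂ u₁)*(inner2 uh₂ u₂)))^2 := by ring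
    rw [heq]; exact hh
  have hn1 : (norm2 ut₂)^2 = 1 := by rw [hut₂norm]; norm_num
  rw [norm2, Real.sq_sqrt (sumsq_nonneg _)] at hn1
  have hsum : ∑ i, (a*uh₁ i + b*uh₂ i - 0*u₂ i)^2 = 1 := by
    rw [← hn1]
    apply Finset.sum_congr rfl
    intro i _
    rw [hab]; simp only [Pi.add_apply, Pi.smul_apply, smul_eq_mul]; ring
  rw [sum_sq_three, huh₁, huh₂, huh₁₂, hu₂] at hsum
  have F4 : a^2 + b^2 = 1 := by linarith [hsum]
  rw [hub₁, proj_mulVec, hab, inner2_comb2, huh₁, huh₂, huh₁₂] at hut₂perp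
  have F5 : a*(inner2 uh₁ u₁) + b*(inner2 uh₂ u₁) = 0 := by linarith [hut₂perp]
  obtain ⟨β, hβor, hle⟩ := scalar_final δ a b (inner2 uh₁ u₁) (inner2 uh₂ u₁)
    (inner2 uh₁ u₂) (inner2 uh₂ u₂) hδ0 hδ F1 F2 F2' F3 F4 F5
  refine ⟨β, hβor, ?_⟩
  have hβ2 : β^2 = 1 := by rcases hβor with h | h <;> rw [h] <;> norm_num
  have hns : norm2 (ut₂ - β • u₂)^2 = ∑ i, (a*uh₁ i + b*uh₂ i - β*u₂ i)^2 := by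
    rw [norm2, Real.sq_sqrt (sumsq_nonneg _)]
    apply Finset.sum_congr rfl
    intro i _
    rw [hab]; simp only [Pi.sub_apply, Pi.add_apply, Pi.smul_apply, smul_eq_mul]
  rw [hns, sum_sq_three, huh₁, huh₂, huh₁₂, hu₂]
  linarith [hle, F4, hβ2]


end
end

section
/- Let H = ηp C + Z with ‖Z‖₂ ≤ Δ, and set σ = ηp·√n·‖r − αe‖₂; suppose Δ ≤ σ/3. Let û₁, û₂ ∈ ℝ^n be orthonormal with H Hᵀ ûᵢ = σ̂ᵢ² ûᵢ, where σ̂₁ ≥ σ̂₂ are the two largest singular values of H; set Û = [û₁ û₂], Σ̂ = diag(σ̂₁, σ̂₂), and define E₄ = Z·(ηp C)·Û·Σ̂^{−2}. Then ‖E₄‖_max ≤ (9/(4σ))·( ‖Z u₁‖_∞ + ‖Z u₂‖_∞ ). -/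
open Matrix MeasureTheory ProbabilityTheory Real

noncomputable section

lemma inner2_comm {n : ℕ} (x y : Fin n → ℝ) : inner2 x y = inner2 y x := by
  unfold inner2; exact Finset.sum_congr rfl fun i _ => by ring

lemma inner2_self_nonneg {n : ℕ} (x : Fin n → ℝ) : 0 ≤ inner2 x x := by
  unfold inner2; exact Finset.sum_nonneg fun i _ => mul_self_nonneg _

lemma norm2_eq_sqrt {n : ℕ} (x : Fin n → ℝ) : norm2 x = Real.sqrt (inner2 x x) := by
  unfold norm2 inner2; congr 1; exact Finset.sum_congr rfl fun i _ => sq (x i) ▸ by ring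

lemma norm2_nonneg {n : ℕ} (x : Fin n → ℝ) : 0 ≤ norm2 x := Real.sqrt_nonneg _

lemma inner2_CS {n : ℕ} (x y : Fin n → ℝ) :
    inner2 x y ^ 2 ≤ inner2 x x * inner2 y y := by
  have := Finset.sum_mul_sq_le_sq_mul_sq Finset.univ x y
  simpa [inner2, sq] using this

lemma abs_inner2_le {n : ℕ} (x y : Fin n → ℝ) : |inner2 x y| ≤ norm2 x * norm2 y := by
  rw [norm2_eq_sqrt, norm2_eq_sqrt, ← Real.sqrt_mul (inner2_self_nonneg x),
    ← Real.sqrt_sq_eq_abs]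
  exact Real.sqrt_le_sqrt (inner2_CS x y)

lemma norm2_eq_zero' {n : ℕ} {x : Fin n → ℝ} (h : norm2 x = 0) : x = 0 := by
  have hnn : 0 ≤ ∑ i, x i ^ 2 := Finset.sum_nonneg fun i _ => sq_nonneg _
  have h0 : ∑ i, x i ^ 2 = 0 := le_antisymm (Real.sqrt_eq_zero'.mp h) hnn
  funext i
  have := (Finset.sum_eq_zero_iff_of_nonneg (fun i _ => sq_nonneg (x i))).mp h0 i (Finset.mem_univ i)
  exact pow_eq_zero_iff two_ne_zero |>.mp this

lemma norm2_smul' {n : ℕ} (c : ℝ) (x : Fin n → ℝ) :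
    norm2 (fun i => c * x i) = |c| * norm2 x := by
  unfold norm2
  rw [← Real.sqrt_sq_eq_abs, ← Real.sqrt_mul (sq_nonneg c), Finset.mul_sum]
  congr 1; exact Finset.sum_congr rfl fun i _ => by ring

lemma specNorm_mulVec_le {m n : ℕ} (A : Matrix (Fin m) (Fin n) ℝ) (x : Fin n → ℝ) :
    norm2 (A.mulVec x) ≤ specNorm A * norm2 x := by
  have hbdd : BddAbove (Set.range fun y : {y : Fin n → ℝ // norm2 y ≤ 1} =>
      norm2 (A.mulVec y.1)) := by
    refine ⟨Real.sqrt (∑ i, ∑ j, A i j ^ 2), ?_⟩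
    rintro _ ⟨y, rfl⟩
    have hy : ∑ j, (y.1 j) ^ 2 ≤ 1 := by
      have h1 : Real.sqrt (∑ j, y.1 j ^ 2) ≤ 1 := y.2
      have h2 : 0 ≤ ∑ j, y.1 j ^ 2 := Finset.sum_nonneg fun j _ => sq_nonneg _
      nlinarith [Real.sq_sqrt h2, Real.sqrt_nonneg (∑ j, y.1 j ^ 2)]
    unfold norm2
    apply Real.sqrt_le_sqrt
    calc ∑ i, (A.mulVec y.1 i) ^ 2
        ≤ ∑ i, (∑ j, A i j ^ 2) * (∑ j, (y.1 j) ^ 2) := by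
          refine Finset.sum_le_sum fun i _ => ?_
          have := Finset.sum_mul_sq_le_sq_mul_sq Finset.univ (fun j => A i j) y.1
          simpa [Matrix.mulVec, dotProduct] using this
      _ ≤ ∑ i, ∑ j, A i j ^ 2 := by
          refine Finset.sum_le_sum fun i _ => ?_
          have hA : 0 ≤ ∑ j, A i j ^ 2 := Finset.sum_nonneg fun j _ => sq_nonneg _
          nlinarith
  rcases eq_or_lt_of_le (norm2_nonneg x) with h0 | hpos
  · have hx0 : x = 0 := norm2_eq_zero' h0.symm
    subst hx0
    simp only [Matrix.mulVec_zero, ← h0, mul_zero]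
    have : norm2 (0 : Fin m → ℝ) = 0 := by simp [norm2]
    simp [this]
  · set t := norm2 x with ht
    have hy1 : norm2 (fun i => t⁻¹ * x i) ≤ 1 := by
      rw [norm2_smul', abs_of_pos (inv_pos.mpr hpos)]
      rw [inv_mul_cancel₀ (ne_of_gt hpos)]
    have hle : norm2 (A.mulVec fun i => t⁻¹ * x i) ≤ specNorm A :=
      le_ciSup hbdd (⟨fun i => t⁻¹ * x i, hy1⟩ : {y : Fin n → ℝ // norm2 y ≤ 1})
    have hAy : A.mulVec (fun i => t⁻¹ * x i) = fun i => t⁻¹ * A.mulVec x i := by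
      funext i
      simp only [Matrix.mulVec, dotProduct, Finset.mul_sum]
      exact Finset.sum_congr rfl fun j _ => by ring
    rw [hAy, norm2_smul', abs_of_pos (inv_pos.mpr hpos)] at hle
    calc norm2 (A.mulVec x) = t * (t⁻¹ * norm2 (A.mulVec x)) := by
          field_simp
      _ ≤ t * specNorm A := by
          exact mul_le_mul_of_nonneg_left hle (le_of_lt hpos)
      _ = specNorm A * t := mul_comm _ _

lemma inner2_mulVec_left {m n : ℕ} (H : Matrix (Fin m) (Fin n) ℝ) (x : Fin n → ℝ)
    (y : Fin m → ℝ) : inner2 (H.mulVec x) y = inner2 x (Matrix.vecMul y H) := by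
  simp only [inner2, Matrix.mulVec, Matrix.vecMul, dotProduct, Finset.sum_mul, Finset.mul_sum]
  rw [Finset.sum_comm]
  exact Finset.sum_congr rfl fun j _ => Finset.sum_congr rfl fun i _ => by ring

lemma inner2_expand {n : ℕ} (f g p q : Fin n → ℝ) (a b : ℝ) :
    inner2 (fun i => f i + a * g i) (fun i => p i + b * q i)
      = inner2 f p + b * inner2 f q + a * inner2 g p + a * b * inner2 g q := by
  simp only [inner2, Finset.mul_sum, ← Finset.sum_add_distrib]
  exact Finset.sum_congr rfl fun i _ => by ring

lemma inner2_span {n : ℕ} {x y : Fin n → ℝ} (h11 : inner2 x x = 1) (h22 : inner2 y y = 1)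
    (h12 : inner2 x y = 0) (a b c d : ℝ) :
    inner2 (fun i => a * x i + b * y i) (fun i => c * x i + d * y i) = a * c + b * d := by
  have h21 : inner2 y x = 0 := by rw [inner2_comm]; exact h12
  simp only [inner2, Finset.mul_sum, ← Finset.sum_add_distrib] at *
  calc ∑ i, (a * x i + b * y i) * (c * x i + d * y i)
      = ∑ i, ((a*c) * (x i * x i) + ((a*d) * (x i * y i) + ((b*c) * (y i * x i)
        + (b*d) * (y i * y i)))) := Finset.sum_congr rfl fun i _ => by ring
    _ = a * c + b * d := by
        simp only [Finset.sum_add_distrib, ← Finset.mul_sum, h11, h22, h12, h21]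
        ring

lemma mulVec_lin {m n : ℕ} (S : Matrix (Fin m) (Fin n) ℝ) (x y : Fin n → ℝ) (a : ℝ) :
    S.mulVec (fun i => x i + a * y i) = fun i => S.mulVec x i + a * S.mulVec y i := by
  funext i
  simp only [Matrix.mulVec, dotProduct, Finset.mul_sum, ← Finset.sum_add_distrib]
  exact Finset.sum_congr rfl fun k _ => by ring


lemma inner2_two_left {n : ℕ} (x y z : Fin n → ℝ) (a b : ℝ) :
    inner2 (fun i => a * x i + b * y i) z = a * inner2 x z + b * inner2 y z := by
  simp only [inner2, Finset.mul_sum, ← Finset.sum_add_distrib]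
  exact Finset.sum_congr rfl fun i _ => by ring

lemma inner2_addmul_left {n : ℕ} (x y z : Fin n → ℝ) (a : ℝ) :
    inner2 (fun i => x i + a * y i) z = inner2 x z + a * inner2 y z := by
  simp only [inner2, Finset.mul_sum, ← Finset.sum_add_distrib]
  exact Finset.sum_congr rfl fun i _ => by ring

lemma inner2_smul_left' {n : ℕ} (c : ℝ) (f z : Fin n → ℝ) :
    inner2 (fun i => c * f i) z = c * inner2 f z := by
  simp only [inner2, Finset.mul_sum]
  exact Finset.sum_congr rfl fun i _ => by ring

lemma inner2_smul_right' {n : ℕ} (c : ℝ) (f z : Fin n → ℝ) :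
    inner2 z (c • f) = c * inner2 z f := by
  simp only [inner2, Pi.smul_apply, smul_eq_mul, Finset.mul_sum]
  exact Finset.sum_congr rfl fun i _ => by ring

lemma inner2_add_left' {n : ℕ} (f g z : Fin n → ℝ) :
    inner2 (f + g) z = inner2 f z + inner2 g z := by
  simp only [inner2, Pi.add_apply, add_mul, Finset.sum_add_distrib]

lemma inner2_expand' {n : ℕ} (f g p q : Fin n → ℝ) (a b c : ℝ) :
    inner2 (fun i => f i + a * (c * g i)) (fun i => p i + b * q i)
      = inner2 f p + b * inner2 f q + a * c * inner2 g p + a * b * c * inner2 g q := by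
  simp only [inner2, Finset.mul_sum, ← Finset.sum_add_distrib]
  exact Finset.sum_congr rfl fun i _ => by ring


set_option maxHeartbeats 2000000 in
/-- Lemma: max-norm bound on `E₄`. -/
theorem stmt_14 {n : ℕ} (hn : 2 ≤ n) (M p η : ℝ) (hM : 0 < M)
    (hp : 0 < p) (hp1 : p ≤ 1) (hη : 0 < η) (hη1 : η ≤ 1)
    (r : Fin n → ℝ) (hr : ∀ i, 0 ≤ r i ∧ r i ≤ M)
    (e : Fin n → ℝ) (he : e = onesVec n)
    (α : ℝ) (hα : α = inner2 r e / n) (hne : r ≠ α • e)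
    (u₁ u₂ : Fin n → ℝ)
    (hu₁ : u₁ = (Real.sqrt n)⁻¹ • e)
    (hu₂ : u₂ = (norm2 (r - α • e))⁻¹ • (r - α • e))
    (C : Matrix (Fin n) (Fin n) ℝ) (hC : C = vecMulVec r e - vecMulVec e r)
    (Z : Matrix (Fin n) (Fin n) ℝ) (Δ : ℝ) (hZ : specNorm Z ≤ Δ)
    (H : Matrix (Fin n) (Fin n) ℝ) (hH : H = (η * p) • C + Z)
    (σ : ℝ) (hσ : σ = η * p * Real.sqrt n * norm2 (r - α • e))
    (hΔ : Δ ≤ σ / 3)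
    (σh₁ σh₂ : ℝ) (uh₁ uh₂ : Fin n → ℝ)
    (htop : IsTopTwoSingular H σh₁ σh₂ uh₁ uh₂)
    (E₄ : Matrix (Fin n) (Fin 2) ℝ)
    (hE₄ : E₄ = Z * ((η * p) • C) * twoCols uh₁ uh₂ *
        Matrix.diagonal ![(σh₁ ^ 2)⁻¹, (σh₂ ^ 2)⁻¹]) :
    maxNorm E₄ ≤ 9 / (4 * σ) * (normInf (Z.mulVec u₁) + normInf (Z.mulVec u₂)) := by
  obtain ⟨hσ2nn, hσ12, hnu1, hnu2, huorth, hev1, hev2, hmax⟩ := htop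
  have hn0 : 0 < n := by omega
  have hnR : (0:ℝ) < (n:ℝ) := by exact_mod_cast hn0
  have hsn : (0:ℝ) < Real.sqrt n := Real.sqrt_pos.mpr hnR
  have hsqn : Real.sqrt n * Real.sqrt n = (n:ℝ) := Real.mul_self_sqrt (le_of_lt hnR)
  haveI : Nonempty (Fin n) := ⟨⟨0, hn0⟩⟩
  set β := norm2 (r - α • e) with hβdef
  have hβ : 0 < β := by
    rcases (norm2_nonneg (r - α • e)).lt_or_eq with h | h
    · exact h
    · exact absurd (sub_eq_zero.mp (norm2_eq_zero' h.symm)) hne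
  have hσpos : 0 < σ := by
    rw [hσ]
    exact mul_pos (mul_pos (mul_pos hη hp) hsn) hβ
  have h11 : inner2 u₁ u₁ = 1 := by
    simp only [inner2, hu₁, he, onesVec, Pi.smul_apply, smul_eq_mul, mul_one,
      Finset.sum_const, Finset.card_univ, Fintype.card_fin, nsmul_eq_mul]
    rw [← hsqn]; field_simp; rw [Real.sqrt_sq hsn.le]
  have hβsq : β ^ 2 = ∑ i, ((r - α • e) i) ^ 2 := by
    rw [hβdef]
    exact Real.sq_sqrt (Finset.sum_nonneg fun i _ => sq_nonneg _)
  have h22 : inner2 u₂ u₂ = 1 := by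
    have e1 : inner2 u₂ u₂ = β⁻¹ * β⁻¹ * ∑ i, ((r - α • e) i) ^ 2 := by
      simp only [inner2, hu₂, Pi.smul_apply, smul_eq_mul, Finset.mul_sum]
      exact Finset.sum_congr rfl fun i _ => by ring
    rw [e1, ← hβsq]; field_simp
  have hsum0 : ∑ i, (r - α • e) i = 0 := by
    have e2 : ∑ i, (r - α • e) i = (∑ i, r i) - (n:ℝ) * α := by
      simp [Pi.sub_apply, Pi.smul_apply, he, onesVec, smul_eq_mul, mul_one,
        Finset.sum_sub_distrib, Finset.sum_const, Finset.card_univ, nsmul_eq_mul]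
    have e3 : inner2 r e = ∑ i, r i := by simp [inner2, he, onesVec]
    rw [e2, hα, e3]
    field_simp
    ring
  have h12 : inner2 u₁ u₂ = 0 := by
    have e1 : inner2 u₁ u₂ = (Real.sqrt n)⁻¹ * β⁻¹ * ∑ i, (r - α • e) i := by
      simp only [inner2, hu₁, hu₂, Pi.smul_apply, smul_eq_mul, he, onesVec,
        mul_one, Finset.mul_sum]
      exact Finset.sum_congr rfl fun i _ => by ring
    rw [e1, hsum0, mul_zero]
  have hCkey : ∀ k l, (η * p) * C k l = σ * (u₂ k * u₁ l - u₁ k * u₂ l) := by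
    intro k l
    have hek : e k = 1 := by rw [he]; rfl
    have hel : e l = 1 := by rw [he]; rfl
    have hCkl : C k l = r k - r l := by
      rw [hC]; simp [Matrix.vecMulVec_apply, hek, hel]
    have hu1k : u₁ k = (Real.sqrt n)⁻¹ := by
      rw [hu₁]; simp [Pi.smul_apply, smul_eq_mul, hek]
    have hu1l : u₁ l = (Real.sqrt n)⁻¹ := by
      rw [hu₁]; simp [Pi.smul_apply, smul_eq_mul, hel]
    have hu2k : u₂ k = β⁻¹ * (r k - α) := by
      rw [hu₂]
      simp [Pi.smul_apply, Pi.sub_apply, smul_eq_mul, hek]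
    have hu2l : u₂ l = β⁻¹ * (r l - α) := by
      rw [hu₂]
      simp [Pi.smul_apply, Pi.sub_apply, smul_eq_mul, hel]
    rw [hCkl, hu1k, hu1l, hu2k, hu2l, hσ]
    field_simp
    ring
  have hInf : ∀ (y : Fin n → ℝ) (i : Fin n), |y i| ≤ normInf y := by
    intro y i
    unfold normInf
    exact le_ciSup (f := fun i => |y i|) (Set.finite_range _).bddAbove i
  -- lower bound on σh₂
  obtain ⟨c₁, c₂, hs0, hperp⟩ : ∃ c₁ c₂ : ℝ, 0 < c₁^2 + c₂^2 ∧
      c₁ * inner2 u₁ uh₁ + c₂ * inner2 u₂ uh₁ = 0 := by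
    by_cases hcase : inner2 u₁ uh₁ = 0 ∧ inner2 u₂ uh₁ = 0
    · exact ⟨1, 0, by norm_num, by rw [hcase.1, hcase.2]; ring⟩
    · refine ⟨-(inner2 u₂ uh₁), inner2 u₁ uh₁, ?_, by ring⟩
      have hne0 : ¬((-(inner2 u₂ uh₁))^2 + (inner2 u₁ uh₁)^2 = 0) := by
        intro hc
        have h1 : (inner2 u₂ uh₁)^2 = 0 := by
          linarith [sq_nonneg (inner2 u₂ uh₁), sq_nonneg (inner2 u₁ uh₁), hc]
        have h2 : (inner2 u₁ uh₁)^2 = 0 := by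
          linarith [sq_nonneg (inner2 u₂ uh₁), sq_nonneg (inner2 u₁ uh₁), hc]
        exact hcase ⟨pow_eq_zero_iff two_ne_zero |>.mp h2,
          pow_eq_zero_iff two_ne_zero |>.mp h1⟩
      exact lt_of_le_of_ne (by positivity) (Ne.symm hne0)
  set v : Fin n → ℝ := fun i => c₁ * u₁ i + c₂ * u₂ i with hvdef
  set w : Fin n → ℝ := fun i => c₂ * u₁ i + (-c₁) * u₂ i with hwdef
  set s : ℝ := c₁^2 + c₂^2 with hsdef
  have hvv : inner2 v v = s := by
    rw [hvdef, inner2_span h11 h22 h12, hsdef]; ring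
  have hww : inner2 w w = s := by
    rw [hwdef, inner2_span h11 h22 h12, hsdef]; ring
  have hu1w : inner2 u₁ w = c₂ := by
    have h := inner2_span h11 h22 h12 1 0 c₂ (-c₁)
    rw [← hwdef] at h
    simpa using h
  have hu2w : inner2 u₂ w = -c₁ := by
    have h := inner2_span h11 h22 h12 0 1 c₂ (-c₁)
    rw [← hwdef] at h
    simpa using h
  have hvperp : inner2 v uh₁ = 0 := by
    rw [hvdef, inner2_two_left]; exact hperp
  have hCmul : ∀ (z : Fin n → ℝ) (i : Fin n), ((η*p) • C).mulVec z i
      = σ * (u₂ i * inner2 u₁ z - u₁ i * inner2 u₂ z) := by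
    intro z i
    have hCik : ∀ k, ((η*p) • C) i k = σ * (u₂ i * u₁ k - u₁ i * u₂ k) := fun k => by
      rw [Matrix.smul_apply, smul_eq_mul]; exact hCkey i k
    simp only [Matrix.mulVec, dotProduct, hCik, inner2, mul_sub, Finset.mul_sum,
      Finset.sum_mul, ← Finset.sum_sub_distrib]
    exact Finset.sum_congr rfl fun k _ => by ring
  have hCw : ((η*p) • C).mulVec w = fun i => σ * v i := by
    funext i
    rw [hCmul w i, hu1w, hu2w]
    simp only [hvdef]
    ring
  have hHwv : inner2 (H.mulVec w) v = σ * s + inner2 (Z.mulVec w) v := by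
    rw [hH, Matrix.add_mulVec, inner2_add_left', hCw, inner2_smul_left', hvv]
  have habs : |inner2 (Z.mulVec w) v| ≤ Δ * s := by
    have h1 := abs_inner2_le (Z.mulVec w) v
    have h2 : norm2 (Z.mulVec w) ≤ Δ * norm2 w :=
      le_trans (specNorm_mulVec_le Z w) (mul_le_mul_of_nonneg_right hZ (norm2_nonneg w))
    have hnv : norm2 v = Real.sqrt s := by rw [norm2_eq_sqrt, hvv]
    have hnw : norm2 w = Real.sqrt s := by rw [norm2_eq_sqrt, hww]
    have hss : Real.sqrt s * Real.sqrt s = s := Real.mul_self_sqrt (le_of_lt hs0)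
    calc |inner2 (Z.mulVec w) v| ≤ norm2 (Z.mulVec w) * norm2 v := h1
      _ ≤ (Δ * norm2 w) * norm2 v := mul_le_mul_of_nonneg_right h2 (norm2_nonneg v)
      _ = Δ * s := by rw [hnv, hnw, mul_assoc, hss]
  have hlow : (σ - Δ) * s ≤ inner2 (H.mulVec w) v := by
    rw [hHwv]
    have hmt := (abs_le.mp habs).1
    linarith
  have hqv_eq : inner2 ((H*Hᵀ).mulVec v) v
      = inner2 (Matrix.vecMul v H) (Matrix.vecMul v H) := by
    rw [← Matrix.mulVec_mulVec, Matrix.mulVec_transpose, inner2_mulVec_left]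
  have hcross : inner2 (H.mulVec w) v = inner2 w (Matrix.vecMul v H) :=
    inner2_mulVec_left H w v
  have hσΔ : 0 ≤ σ - Δ := by linarith
  have hq_low : ((σ - Δ) * s)^2 ≤ s * inner2 ((H*Hᵀ).mulVec v) v := by
    have hCS := inner2_CS w (Matrix.vecMul v H)
    have h0 : 0 ≤ (σ - Δ) * s := mul_nonneg hσΔ (le_of_lt hs0)
    calc ((σ - Δ) * s)^2 ≤ (inner2 (H.mulVec w) v)^2 := pow_le_pow_left₀ h0 hlow 2
      _ = (inner2 w (Matrix.vecMul v H))^2 := by rw [hcross]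
      _ ≤ inner2 w w * inner2 (Matrix.vecMul v H) (Matrix.vecMul v H) := hCS
      _ = s * inner2 ((H*Hᵀ).mulVec v) v := by rw [hww, hqv_eq]
  have hsymm : ∀ x y : Fin n → ℝ,
      inner2 ((H*Hᵀ).mulVec x) y = inner2 x ((H*Hᵀ).mulVec y) := by
    intro x y
    have h1 : inner2 ((H*Hᵀ).mulVec x) y
        = inner2 (Matrix.vecMul x H) (Matrix.vecMul y H) := by
      rw [← Matrix.mulVec_mulVec, Matrix.mulVec_transpose, inner2_mulVec_left]
    have h2 : inner2 ((H*Hᵀ).mulVec y) x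
        = inner2 (Matrix.vecMul y H) (Matrix.vecMul x H) := by
      rw [← Matrix.mulVec_mulVec, Matrix.mulVec_transpose, inner2_mulVec_left]
    calc inner2 ((H*Hᵀ).mulVec x) y
        = inner2 (Matrix.vecMul x H) (Matrix.vecMul y H) := h1
      _ = inner2 (Matrix.vecMul y H) (Matrix.vecMul x H) := inner2_comm _ _
      _ = inner2 ((H*Hᵀ).mulVec y) x := h2.symm
      _ = inner2 x ((H*Hᵀ).mulVec y) := inner2_comm _ _
  have huorth' : inner2 uh₂ uh₁ = 0 := by rw [inner2_comm]; exact huorth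
  have hq_up : ∀ x : Fin n → ℝ, inner2 x uh₁ = 0 →
      inner2 ((H*Hᵀ).mulVec x) x ≤ σh₂^2 * inner2 x x := by
    intro x hx1
    set a : ℝ := inner2 x uh₂ with hadef
    set w' : Fin n → ℝ := fun i => x i + (-a) * uh₂ i with hw'def
    have hxw : x = fun i => w' i + a * uh₂ i := by
      funext i; simp only [hw'def]; ring
    have hw'1 : inner2 w' uh₁ = 0 := by
      rw [hw'def, inner2_addmul_left, hx1, huorth']; ring
    have hw'2 : inner2 w' uh₂ = 0 := by
      rw [hw'def, inner2_addmul_left, hnu2, ← hadef]; ring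
    have huh2w' : inner2 uh₂ w' = 0 := by rw [inner2_comm]; exact hw'2
    have hmx := hmax w' hw'1 hw'2
    have hSx : (H*Hᵀ).mulVec x = fun i => (H*Hᵀ).mulVec w' i + a * (σh₂^2 * uh₂ i) := by
      conv_lhs => rw [hxw]
      rw [mulVec_lin]
      funext i
      have he2 := congrFun hev2 i
      simp only [Pi.smul_apply, smul_eq_mul] at he2
      rw [he2]
    have hSw'uh : inner2 ((H*Hᵀ).mulVec w') uh₂ = 0 := by
      rw [hsymm w' uh₂, hev2, inner2_smul_right', hw'2, mul_zero]
    have hexp : inner2 ((H*Hᵀ).mulVec x) x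
        = inner2 ((H*Hᵀ).mulVec w') w' + a * a * σh₂^2 := by
      rw [hSx]
      conv_lhs => rw [hxw]
      rw [inner2_expand' ((H*Hᵀ).mulVec w') uh₂ w' uh₂ a a (σh₂^2)]
      rw [hSw'uh, huh2w', hnu2]
      ring
    have hxx : inner2 x x = inner2 w' w' + a * a := by
      conv_lhs => rw [hxw]
      rw [inner2_expand w' uh₂ w' uh₂ a a, hw'2, huh2w', hnu2]
      ring
    rw [hexp, hxx]
    linarith [hmx]
  have hqv_up : inner2 ((H*Hᵀ).mulVec v) v ≤ σh₂^2 * s := by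
    have h := hq_up v hvperp
    rwa [hvv] at h
  have hkey2 : (σ - Δ)^2 ≤ σh₂^2 := by
    have h1 : ((σ - Δ) * s)^2 ≤ s * (σh₂^2 * s) :=
      le_trans hq_low (mul_le_mul_of_nonneg_left hqv_up (le_of_lt hs0))
    have h2 : (σ - Δ)^2 * s^2 ≤ σh₂^2 * s^2 := by linarith [h1]
    exact le_of_mul_le_mul_right h2 (pow_pos hs0 2)
  have hsΔ2 : σ - Δ ≤ σh₂ := by
    have h := Real.sqrt_le_sqrt hkey2
    rwa [Real.sqrt_sq hσΔ, Real.sqrt_sq hσ2nn] at h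
  have hsh2 : 2*σ/3 ≤ σh₂ := by linarith
  have hsh1 : 2*σ/3 ≤ σh₁ := le_trans hsh2 hσ12
  -- entrywise bound
  have key : ∀ (uh : Fin n → ℝ) (σh : ℝ), inner2 uh uh = 1 → 2*σ/3 ≤ σh → ∀ i : Fin n,
      |σ * (Z.mulVec u₂ i * inner2 u₁ uh - Z.mulVec u₁ i * inner2 u₂ uh) * (σh^2)⁻¹|
        ≤ 9/(4*σ) * (normInf (Z.mulVec u₁) + normInf (Z.mulVec u₂)) := by
    intro uh σh huh hσh i
    have hσh0 : 0 < σh := lt_of_lt_of_le (by linarith) hσh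
    have hsq : (0:ℝ) < σh^2 := pow_pos hσh0 2
    have ha1 : |inner2 u₁ uh| ≤ 1 := by
      have h := inner2_CS u₁ uh
      rw [h11, huh] at h
      calc |inner2 u₁ uh| = Real.sqrt ((inner2 u₁ uh)^2) := (Real.sqrt_sq_eq_abs _).symm
        _ ≤ Real.sqrt 1 := Real.sqrt_le_sqrt (by linarith [h])
        _ = 1 := Real.sqrt_one
    have ha2 : |inner2 u₂ uh| ≤ 1 := by
      have h := inner2_CS u₂ uh
      rw [h22, huh] at h
      calc |inner2 u₂ uh| = Real.sqrt ((inner2 u₂ uh)^2) := (Real.sqrt_sq_eq_abs _).symm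
        _ ≤ Real.sqrt 1 := Real.sqrt_le_sqrt (by linarith [h])
        _ = 1 := Real.sqrt_one
    have hZ1 : |Z.mulVec u₁ i| ≤ normInf (Z.mulVec u₁) := hInf _ i
    have hZ2 : |Z.mulVec u₂ i| ≤ normInf (Z.mulVec u₂) := hInf _ i
    have hX : |Z.mulVec u₂ i * inner2 u₁ uh - Z.mulVec u₁ i * inner2 u₂ uh|
        ≤ normInf (Z.mulVec u₁) + normInf (Z.mulVec u₂) := by
      have t1 : |Z.mulVec u₂ i * inner2 u₁ uh - Z.mulVec u₁ i * inner2 u₂ uh|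
          ≤ |Z.mulVec u₂ i * inner2 u₁ uh| + |Z.mulVec u₁ i * inner2 u₂ uh| :=
        abs_sub _ _
      rw [abs_mul, abs_mul] at t1
      have t2 : |Z.mulVec u₂ i| * |inner2 u₁ uh| ≤ |Z.mulVec u₂ i| * 1 :=
        mul_le_mul_of_nonneg_left ha1 (abs_nonneg _)
      have t3 : |Z.mulVec u₁ i| * |inner2 u₂ uh| ≤ |Z.mulVec u₁ i| * 1 :=
        mul_le_mul_of_nonneg_left ha2 (abs_nonneg _)
      rw [mul_one] at t2 t3
      linarith
    have hfac : σ * (σh^2)⁻¹ ≤ 9/(4*σ) := by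
      have he' : σ * (σh^2)⁻¹ = σ / σh^2 := by ring
      rw [he', div_le_div_iff₀ hsq (by linarith : (0:ℝ) < 4*σ)]
      have hh : (2*σ/3) * (2*σ/3) ≤ σh * σh :=
        mul_le_mul hσh hσh (by linarith) (by linarith)
      linarith [hh]
    have hNnn : 0 ≤ normInf (Z.mulVec u₁) + normInf (Z.mulVec u₂) := by
      have q1 := le_trans (abs_nonneg _) hZ1
      have q2 := le_trans (abs_nonneg _) hZ2
      linarith
    calc |σ * (Z.mulVec u₂ i * inner2 u₁ uh - Z.mulVec u₁ i * inner2 u₂ uh) * (σh^2)⁻¹|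
        = σ * |Z.mulVec u₂ i * inner2 u₁ uh - Z.mulVec u₁ i * inner2 u₂ uh| * (σh^2)⁻¹ := by
          rw [abs_mul, abs_mul, abs_of_pos hσpos, abs_of_pos (inv_pos.mpr hsq)]
      _ = (σ * (σh^2)⁻¹) * |Z.mulVec u₂ i * inner2 u₁ uh - Z.mulVec u₁ i * inner2 u₂ uh| := by
          ring
      _ ≤ 9/(4*σ) * (normInf (Z.mulVec u₁) + normInf (Z.mulVec u₂)) :=
          mul_le_mul hfac hX (abs_nonneg _) (div_nonneg (by norm_num) (by linarith))
  have hentry : ∀ (i : Fin n) (j : Fin 2),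
      |E₄ i j| ≤ 9/(4*σ) * (normInf (Z.mulVec u₁) + normInf (Z.mulVec u₂)) := by
    intro i j
    have hZu : ∀ (u : Fin n → ℝ), Z.mulVec u i = ∑ k, Z i k * u k := fun u => rfl
    have hZA : ∀ l, (Z * ((η*p) • C)) i l
        = σ * (Z.mulVec u₂ i * u₁ l - Z.mulVec u₁ i * u₂ l) := by
      intro l
      rw [Matrix.mul_apply]
      have h1 : ∀ k, Z i k * ((η*p) • C) k l
          = σ * ((Z i k * u₂ k) * u₁ l - (Z i k * u₁ k) * u₂ l) := by
        intro k
        have hc : ((η*p) • C) k l = σ * (u₂ k * u₁ l - u₁ k * u₂ l) := by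
          rw [Matrix.smul_apply, smul_eq_mul]; exact hCkey k l
        rw [hc]; ring
      simp only [h1, hZu, mul_sub, Finset.mul_sum, Finset.sum_mul,
        ← Finset.sum_sub_distrib]
      try exact Finset.sum_congr rfl fun k _ => by ring
    have hsum : ∀ uh : Fin n → ℝ, (∑ l, (Z * ((η*p) • C)) i l * uh l)
        = σ * (Z.mulVec u₂ i * inner2 u₁ uh - Z.mulVec u₁ i * inner2 u₂ uh) := by
      intro uh
      simp only [hZA, inner2, mul_sub, Finset.mul_sum, Finset.sum_mul,
        ← Finset.sum_sub_distrib]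
      exact Finset.sum_congr rfl fun l _ => by ring
    have hEij : E₄ i j = (∑ l, (Z * ((η*p) • C)) i l * twoCols uh₁ uh₂ l j)
        * ![(σh₁^2)⁻¹, (σh₂^2)⁻¹] j := by
      rw [hE₄, Matrix.mul_diagonal, Matrix.mul_apply]
    rcases (by omega : j.val = 0 ∨ j.val = 1) with h0 | h0
    · have hj0 : j = 0 := Fin.ext h0
      subst hj0
      have hcol : ∀ l, twoCols uh₁ uh₂ l (0 : Fin 2) = uh₁ l := fun l => rfl
      rw [hEij]
      simp only [hcol, Matrix.cons_val_zero]
      rw [hsum uh₁]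
      exact key uh₁ σh₁ hnu1 hsh1 i
    · have hj1 : j = 1 := Fin.ext h0
      subst hj1
      have hcol : ∀ l, twoCols uh₁ uh₂ l (1 : Fin 2) = uh₂ l := fun l => rfl
      rw [hEij]
      simp only [hcol, Matrix.cons_val_one, Matrix.head_cons]
      rw [hsum uh₂]
      exact key uh₂ σh₂ hnu2 hsh2 i
  haveI : Nonempty (Fin n × Fin 2) := ⟨⟨⟨0, hn0⟩, 0⟩⟩
  unfold maxNorm
  exact ciSup_le fun q => hentry q.1 q.2

end
end
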